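/- Let p, θ₁,…,θₙ be polynomials in n variables, and suppose ∑ᵢ (∂p/∂xᵢ)(x) · θᵢ(x) > 0 for all x ∈ ℝⁿ. If φ : [0,r] → ℝⁿ is differentiable with φ'(t) = θ(φ(t)) for all t and p(φ(0)) > 0, then p(φ(t)) > 0 for all t ∈ [0,r]. -/

import Mathlib

open MvPolynomial Set

theorem stmt_6 (n : ℕ) (p : MvPolynomial (Fin n) ℝ) (θ : Fin n → MvPolynomial (Fin n) ℝ)
    (hLie : ∀ x : Fin n → ℝ, 0 < ∑ i, eval x (pderiv i p) * eval x (θ i))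
    (r : ℝ) (φ : ℝ → Fin n → ℝ)
    (hφ : ∀ i, ∀ t ∈ Icc (0:ℝ) r,
      HasDerivWithinAt (fun s => φ s i) (eval (φ t) (θ i)) (Icc (0:ℝ) r) t)
    (h0 : 0 < eval (φ 0) p) :
    ∀ t ∈ Icc (0:ℝ) r, 0 < eval (φ t) p := by
  have key : ∀ q : MvPolynomial (Fin n) ℝ, ∀ t ∈ Icc (0:ℝ) r,
      HasDerivWithinAt (fun s => eval (φ s) q)
        (∑ i, eval (φ t) (pderiv i q) * eval (φ t) (θ i)) (Icc (0:ℝ) r) t := by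
    intro q
    induction q using MvPolynomial.induction_on with
    | C a =>
      intro t ht
      simp only [eval_C, map_zero, pderiv_C, zero_mul, Finset.sum_const_zero]
      exact hasDerivWithinAt_const _ _ _
    | add f g hf hg =>
      intro t ht
      have := (hf t ht).add (hg t ht)
      simpa [map_add, add_mul, Finset.sum_add_distrib, Pi.add_def] using this
    | mul_X f j hf =>
      intro t ht
      have h1 := (hf t ht).mul (hφ j t ht)
      have : (∑ i, eval (φ t) (pderiv i f) * eval (φ t) (θ i)) * eval (φ t) (X j)
          + eval (φ t) f * eval (φ t) (θ j)
          = ∑ i, eval (φ t) (pderiv i (f * X j)) * eval (φ t) (θ i) := by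
        simp only [pderiv_mul, pderiv_X, map_add, map_mul, add_mul,
          Finset.sum_add_distrib, Finset.sum_mul]
        congr 1
        · exact Finset.sum_congr rfl fun i _ => by ring
        · rw [Finset.sum_eq_single j]
          · simp
          · intro i _ hij
            simp [Pi.single_eq_of_ne (Ne.symm hij)]
          · simp
      rw [← this]
      simpa [eval_X, Pi.mul_def] using h1
  have hcont : ContinuousOn (fun s => eval (φ s) p) (Icc (0:ℝ) r) :=
    fun t ht => (key p t ht).continuousWithinAt
  have hmono : StrictMonoOn (fun s => eval (φ s) p) (Icc (0:ℝ) r) := by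
    apply strictMonoOn_of_hasDerivWithinAt_pos (convex_Icc 0 r) hcont
      (f' := fun t => ∑ i, eval (φ t) (pderiv i p) * eval (φ t) (θ i))
    · intro t ht
      exact (key p t (interior_subset ht)).mono interior_subset
    · intro t _
      exact hLie (φ t)
  intro t ht
  rcases eq_or_lt_of_le ht.1 with h | h
  · rwa [← h]
  · have h0mem : (0:ℝ) ∈ Icc (0:ℝ) r := ⟨le_refl 0, le_trans ht.1 ht.2⟩
    exact lt_trans h0 (hmono h0mem ht h)
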